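/- Let U, V and W be normed vector spaces over 𝕜 ∈ {ℝ, ℂ} and let n ∈ ℕ, n ≥ 1. Let λ ∈ B^n(V,W), and let a₁, …, aₙ : U → V be compact continuous linear operators. Define ν : U × ⋯ × U → W by ν(u₁, …, uₙ) := λ(a₁u₁, …, aₙuₙ) for all u₁, …, uₙ ∈ U. Then ν ∈ K^n(U,W). -/

import Mathlib

/-- The spaces `K^n(U,W)` of compact `n`-multilinear maps, defined inductively:
`K^1(U,W)` is the set of compact operators in `B(U,W)`; for `n ≥ 2`, a continuous
`n`-multilinear map lies in `K^n(U,W)` iff the curried map `u ↦ λ(u,·,…,·)` takes values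
in `K^{n-1}(U,W)` and is a compact operator from `U` into `K^{n-1}(U,W)` (with the subspace
topology inherited from the norm of `B^{n-1}(U,W)`). -/
def KMultilinear (𝕜 V W : Type*) [RCLike 𝕜]
    [NormedAddCommGroup V] [NormedSpace 𝕜 V]
    [NormedAddCommGroup W] [NormedSpace 𝕜 W] :
    (n : ℕ) → Set (ContinuousMultilinearMap 𝕜 (fun _ : Fin n => V) W)
  | 0 => Set.univ
  | 1 => {f | IsCompactOperator fun v : V => f fun _ => v}
  | (n + 2) => {f | ∃ hf : ∀ v : V, f.curryLeft v ∈ KMultilinear 𝕜 V W (n + 1),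
      IsCompactOperator fun v : V => (⟨f.curryLeft v, hf v⟩ : KMultilinear 𝕜 V W (n + 1))}

lemma curryLeft_compCLM {𝕜 U V W : Type*} [RCLike 𝕜]
    [NormedAddCommGroup U] [NormedSpace 𝕜 U]
    [NormedAddCommGroup V] [NormedSpace 𝕜 V]
    [NormedAddCommGroup W] [NormedSpace 𝕜 W]
    (n : ℕ)
    (l : ContinuousMultilinearMap 𝕜 (fun _ : Fin (n+2) => V) W)
    (a : Fin (n+2) → (U →L[𝕜] V)) (u : U) :
    (l.compContinuousLinearMap a).curryLeft u
      = (l.curryLeft ((a 0) u)).compContinuousLinearMap (Fin.tail a) := by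
  ext m
  simp [Fin.tail]
  congr 1
  ext i
  refine Fin.cases ?_ ?_ i <;> simp

lemma aux_mem_KMultilinear {𝕜 U V W : Type*} [RCLike 𝕜]
    [NormedAddCommGroup U] [NormedSpace 𝕜 U]
    [NormedAddCommGroup V] [NormedSpace 𝕜 V]
    [NormedAddCommGroup W] [NormedSpace 𝕜 W]
    (n : ℕ) :
    ∀ (l : ContinuousMultilinearMap 𝕜 (fun _ : Fin n => V) W)
      (a : Fin n → (U →L[𝕜] V)), (∀ i, IsCompactOperator (a i)) →
      l.compContinuousLinearMap a ∈ KMultilinear 𝕜 U W n := by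
  induction n using Nat.twoStepInduction with
  | zero => intro l a ha; exact Set.mem_univ _
  | one =>
    intro l a ha
    show IsCompactOperator fun u : U => (l.compContinuousLinearMap a) fun _ => u
    have : (fun u : U => (l.compContinuousLinearMap a) fun _ => u)
        = (fun v : V => l fun _ => v) ∘ (a 0) := by
      funext u
      show l (fun i => a i u) = l (fun _ => a 0 u)
      congr 1
      funext i
      rw [Subsingleton.elim i 0]
    rw [this]
    exact (ha 0).continuous_comp
      (l.cont.comp (continuous_pi fun _ => continuous_id))
  | more n _ ih =>
    intro l a ha
    have key : ∀ u : U, (l.compContinuousLinearMap a).curryLeft u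
        = (l.curryLeft ((a 0) u)).compContinuousLinearMap (Fin.tail a) :=
      curryLeft_compCLM n l a
    have hf : ∀ u : U,
        (l.compContinuousLinearMap a).curryLeft u ∈ KMultilinear 𝕜 U W (n+1) := by
      intro u
      rw [key u]
      exact ih (l.curryLeft ((a 0) u)) (Fin.tail a) (fun i => ha i.succ)
    refine ⟨hf, ?_⟩
    have memΦ : ∀ v : V,
        (l.curryLeft v).compContinuousLinearMap (Fin.tail a)
          ∈ KMultilinear 𝕜 U W (n+1) :=
      fun v => ih (l.curryLeft v) (Fin.tail a) (fun i => ha i.succ)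
    have hg : Continuous fun v : V =>
        (⟨(l.curryLeft v).compContinuousLinearMap (Fin.tail a), memΦ v⟩ :
          KMultilinear 𝕜 U W (n+1)) := by
      refine Continuous.subtype_mk ?_ _
      exact ((ContinuousMultilinearMap.compContinuousLinearMapL
        (Fin.tail a)).comp l.curryLeft).continuous
    have := (ha 0).continuous_comp hg
    convert this using 1
    · rfl
    funext u
    exact Subtype.ext (key u)

/-- If `λ ∈ B^n(V,W)` and `a₁, …, aₙ : U → V` are compact continuous
linear operators, then the `n`-multilinear map `ν(u₁,…,uₙ) := λ(a₁u₁,…,aₙuₙ)` lies in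
`K^n(U,W)`. -/
theorem compContinuousLinearMap_mem_KMultilinear
    {𝕜 U V W : Type*} [RCLike 𝕜]
    [NormedAddCommGroup U] [NormedSpace 𝕜 U]
    [NormedAddCommGroup V] [NormedSpace 𝕜 V]
    [NormedAddCommGroup W] [NormedSpace 𝕜 W]
    (n : ℕ) (hn : 1 ≤ n)
    (l : ContinuousMultilinearMap 𝕜 (fun _ : Fin n => V) W)
    (a : Fin n → (U →L[𝕜] V)) (ha : ∀ i, IsCompactOperator (a i)) :
    l.compContinuousLinearMap a ∈ KMultilinear 𝕜 U W n :=
  aux_mem_KMultilinear n l a ha
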